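/- Suppose x^k ∈ ℝ^{n×p} satisfies the recursion x^{k+1} = Wx^k − α g^k where W is symmetric with W1 = 1, ‖W^j − (1/n)11^T‖ ≤ Cζ^j for all j with 0 ≤ ζ < 1, and ‖g^k‖ ≤ D for all k. Then with x̄^k = (1/n)11^T x^k, for every k and every row i, ‖x^k_{(i)} − x̄^k_{(i)}‖ ≤ Cζ^k‖x^0‖ + αD·C/(1−ζ); in particular in the limit the consensus error is bounded by αDC/(1−ζ). -/

import Mathlib

attribute [local instance] Matrix.frobeniusSeminormedAddCommGroup
  Matrix.frobeniusNormedAddCommGroup Matrix.frobeniusNormedRing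
  Matrix.frobeniusNormedSpace Matrix.frobeniusIsBoundedSMul

/-- The Frobenius norm of a real matrix. -/
noncomputable def frob {m p : Type*} [Fintype m] [Fintype p] (A : Matrix m p ℝ) : ℝ :=
  Real.sqrt (∑ i, ∑ j, (A i j) ^ 2)

lemma frob_eq_norm {m p : Type*} [Fintype m] [Fintype p] (A : Matrix m p ℝ) :
    frob A = ‖A‖ := by
  unfold frob
  rw [Matrix.frobenius_norm_def, Real.sqrt_eq_rpow]
  congr 1
  refine Finset.sum_congr rfl fun i _ => Finset.sum_congr rfl fun j _ => ?_
  rw [Real.norm_eq_abs, show (2 : ℝ) = ((2 : ℕ) : ℝ) by norm_num, Real.rpow_natCast, sq_abs]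

theorem stmt9 {n p : ℕ} (hn : 0 < n) (W : Matrix (Fin n) (Fin n) ℝ)
    (C ζ α D : ℝ) (hC : 0 < C) (hζ0 : 0 ≤ ζ) (hζ1 : ζ < 1) (hα : 0 < α) (hD : 0 ≤ D)
    (hsym : W.transpose = W) (hones : W.mulVec 1 = 1)
    (hWk : ∀ j : ℕ,
      frob (W ^ j - Matrix.of fun _ _ : Fin n => (1 : ℝ) / n) ≤ C * ζ ^ j)
    (x g : ℕ → Matrix (Fin n) (Fin p) ℝ)
    (hg : ∀ k, frob (g k) ≤ D)
    (hrec : ∀ k, x (k + 1) = W * x k - α • g k)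
    (k : ℕ) (i : Fin n) :
    Real.sqrt (∑ j, (x k i j - ((Matrix.of fun _ _ : Fin n => (1 : ℝ) / n) * x k) i j) ^ 2)
      ≤ C * ζ ^ k * frob (x 0) + α * D * C / (1 - ζ) := by
  set J : Matrix (Fin n) (Fin n) ℝ := Matrix.of fun _ _ : Fin n => (1 : ℝ) / n with hJ
  have hnR : (0 : ℝ) < n := by exact_mod_cast hn
  -- WJ = J
  have hWJ : W * J = J := by
    ext a b
    simp only [Matrix.mul_apply, hJ, Matrix.of_apply]
    have h1 : ∑ c, W a c = 1 := by
      have := congrFun hones a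
      simpa [Matrix.mulVec, dotProduct] using this
    rw [← Finset.sum_mul, h1, one_mul]
  -- JW = J
  have hJW : J * W = J := by
    have hJt : J.transpose = J := by ext a b; simp [hJ]
    calc J * W = (W.transpose * J.transpose).transpose := by
          rw [Matrix.transpose_mul, Matrix.transpose_transpose, Matrix.transpose_transpose]
      _ = J := by rw [hsym, hJt, hWJ, hJt]
  have hJJ : J * J = J := by
    ext a b
    simp only [Matrix.mul_apply, hJ, Matrix.of_apply, Finset.sum_const, Finset.card_univ,
      Fintype.card_fin, nsmul_eq_mul]
    field_simp
  have hJWk : ∀ m : ℕ, J * (W ^ m) = J := by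
    intro m
    induction m with
    | zero => simp
    | succ m ih => rw [pow_succ, ← mul_assoc, ih, hJW]
  -- explicit formula
  have hform : ∀ k : ℕ, x k = W ^ k * x 0
      - α • ∑ t ∈ Finset.range k, W ^ t * g (k - 1 - t) := by
    intro k
    induction k with
    | zero => simp
    | succ k ih =>
      have hterm : ∀ t ∈ Finset.range k,
          W ^ (t + 1) * g (k + 1 - 1 - (t + 1)) = W * (W ^ t * g (k - 1 - t)) := by
        intro t ht
        have h : k + 1 - 1 - (t + 1) = k - 1 - t := by omega
        rw [h, pow_succ', Matrix.mul_assoc]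
      rw [hrec k, ih, Finset.sum_range_succ' (fun t => W ^ t * g (k + 1 - 1 - t)),
        Finset.sum_congr rfl hterm]
      simp only [pow_zero, one_mul, Matrix.one_mul, Nat.add_sub_cancel, Nat.sub_zero]
      rw [Matrix.mul_sub, Matrix.mul_smul, Matrix.mul_sum, ← Matrix.mul_assoc, ← pow_succ',
        smul_add]
      abel
  -- deviation formula
  have hdev : x k - J * x k = (W ^ k - J) * x 0
      - α • ∑ t ∈ Finset.range k, (W ^ t - J) * g (k - 1 - t) := by
    rw [hform k]
    rw [Matrix.mul_sub, Matrix.mul_smul, Matrix.mul_sum]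
    have h1 : ∀ t ∈ Finset.range k, J * (W ^ t * g (k - 1 - t)) = J * g (k - 1 - t) := by
      intro t _; rw [← Matrix.mul_assoc, hJWk]
    rw [Finset.sum_congr rfl h1,
      show J * (W ^ k * x 0) = J * x 0 by rw [← Matrix.mul_assoc, hJWk]]
    have h2 : ∑ t ∈ Finset.range k, (W ^ t - J) * g (k - 1 - t)
        = (∑ t ∈ Finset.range k, W ^ t * g (k - 1 - t))
          - ∑ t ∈ Finset.range k, J * g (k - 1 - t) := by
      rw [← Finset.sum_sub_distrib]
      exact Finset.sum_congr rfl fun t _ => Matrix.sub_mul _ _ _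
    rw [h2, Matrix.sub_mul, smul_sub]
    abel
  -- norm bound on the full deviation
  have hnorm : frob (x k - J * x k)
      ≤ C * ζ ^ k * frob (x 0) + α * D * C / (1 - ζ) := by
    rw [hdev, frob_eq_norm]
    have h1 : ‖(W ^ k - J) * x 0‖ ≤ C * ζ ^ k * frob (x 0) := by
      calc ‖(W ^ k - J) * x 0‖ ≤ ‖W ^ k - J‖ * ‖x 0‖ := Matrix.frobenius_norm_mul _ _
        _ ≤ C * ζ ^ k * frob (x 0) := by
            rw [← frob_eq_norm, ← frob_eq_norm]
            exact mul_le_mul_of_nonneg_right (hWk k) (Real.sqrt_nonneg _)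
    have h2 : ‖α • ∑ t ∈ Finset.range k, (W ^ t - J) * g (k - 1 - t)‖
        ≤ α * D * C / (1 - ζ) := by
      rw [norm_smul, Real.norm_eq_abs, abs_of_pos hα]
      have hsum : ‖∑ t ∈ Finset.range k, (W ^ t - J) * g (k - 1 - t)‖
          ≤ ∑ t ∈ Finset.range k, C * ζ ^ t * D := by
        refine (norm_sum_le _ _).trans (Finset.sum_le_sum fun t _ => ?_)
        calc ‖(W ^ t - J) * g (k - 1 - t)‖ ≤ ‖W ^ t - J‖ * ‖g (k - 1 - t)‖ :=
              Matrix.frobenius_norm_mul _ _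
          _ ≤ (C * ζ ^ t) * D := by
              apply mul_le_mul
              · rw [← frob_eq_norm]; exact hWk t
              · rw [← frob_eq_norm]; exact hg _
              · exact norm_nonneg _
              · positivity
      have hgeo : ∑ t ∈ Finset.range k, C * ζ ^ t * D ≤ C * D / (1 - ζ) := by
        have : ∑ t ∈ Finset.range k, C * ζ ^ t * D
            = C * D * ∑ t ∈ Finset.range k, ζ ^ t := by
          rw [Finset.mul_sum]
          exact Finset.sum_congr rfl fun t _ => by ring
        rw [this]
        have hgs : ∑ t ∈ Finset.range k, ζ ^ t ≤ 1 / (1 - ζ) := by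
          rw [geom_sum_eq (by linarith : ζ ≠ 1),
            show (ζ ^ k - 1) / (ζ - 1) = (1 - ζ ^ k) / (1 - ζ) by
              rw [← neg_div_neg_eq]; ring_nf]
          have hnum : 1 - ζ ^ k ≤ 1 := by nlinarith [pow_nonneg hζ0 k]
          gcongr
        calc C * D * ∑ t ∈ Finset.range k, ζ ^ t ≤ C * D * (1 / (1 - ζ)) := by
              apply mul_le_mul_of_nonneg_left hgs (by positivity)
          _ = C * D / (1 - ζ) := by ring
      calc α * ‖∑ t ∈ Finset.range k, (W ^ t - J) * g (k - 1 - t)‖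
          ≤ α * (C * D / (1 - ζ)) := by
            apply mul_le_mul_of_nonneg_left (hsum.trans hgeo) hα.le
        _ = α * D * C / (1 - ζ) := by ring
    calc ‖(W ^ k - J) * x 0 - α • ∑ t ∈ Finset.range k, (W ^ t - J) * g (k - 1 - t)‖
        ≤ ‖(W ^ k - J) * x 0‖ + ‖α • ∑ t ∈ Finset.range k, (W ^ t - J) * g (k - 1 - t)‖ :=
          norm_sub_le _ _
      _ ≤ C * ζ ^ k * frob (x 0) + α * D * C / (1 - ζ) := add_le_add h1 h2
  -- row bound
  refine le_trans ?_ hnorm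
  rw [frob]
  apply Real.sqrt_le_sqrt
  have : ∑ j, (x k i j - (J * x k) i j) ^ 2
      = ∑ j, ((x k - J * x k) i j) ^ 2 := by
    refine Finset.sum_congr rfl fun j _ => ?_
    simp [Matrix.sub_apply]
  rw [this]
  exact Finset.single_le_sum (f := fun i' => ∑ j, ((x k - J * x k) i' j) ^ 2)
    (fun i' _ => Finset.sum_nonneg fun j _ => sq_nonneg _) (Finset.mem_univ i)
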